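/- There is no simple signed Steiner triple system ST(7, 1), i.e., there is no signed set B ⊆ binom(X,3) on a 7-set X with exactly one negative triple such that every pair of points is covered exactly once more by positive triples than by negative triples. -/

import Mathlib

/-- A simple signed Steiner triple system: `Bp` and `Bm` are disjoint sets of
3-subsets, and every 2-subset is contained in exactly one more member of `Bp`
than of `Bm`. -/
def IsSSTS {V : Type*} [DecidableEq V] (Bp Bm : Finset (Finset V)) : Prop :=
  Disjoint Bp Bm ∧ (∀ t ∈ Bp ∪ Bm, t.card = 3) ∧
    ∀ p : Finset V, p.card = 2 →
      (Bp.filter (fun t => p ⊆ t)).card = (Bm.filter (fun t => p ⊆ t)).card + 1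

/-- there is no ST(7,1). -/
theorem no_st_7_1 :
    ¬ ∃ Bp Bm : Finset (Finset (Fin 7)), IsSSTS Bp Bm ∧ Bm.card = 1 := by
  rintro ⟨Bp, Bm, ⟨hdisj, h3, hpair⟩, hBm⟩
  obtain ⟨m, rfl⟩ := Finset.card_eq_one.mp hBm
  have hm3 : m.card = 3 := h3 m (by simp)
  have hmBp : m ∉ Bp := fun h => Finset.disjoint_left.mp hdisj h (by simp)
  have hT3 : ∀ T ∈ Bp, T.card = 3 := fun T hT => h3 T (Finset.mem_union_left _ hT)
  have hNM : ∀ T ∈ Bp, ¬ m ⊆ T := by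
    intro T hT hsub
    have : m = T := Finset.eq_of_subset_of_card_le hsub (by rw [hT3 T hT, hm3])
    exact hmBp (this ▸ hT)
  have hlam : ∀ p : Finset (Fin 7), p.card = 2 →
      (Bp.filter (fun t => p ⊆ t)).card = if p ⊆ m then 2 else 1 := by
    intro p hp
    rw [hpair p hp, Finset.filter_singleton]
    by_cases h : p ⊆ m <;> simp [h]
  -- uniqueness of the block through a pair not inside m
  have hU : ∀ p : Finset (Fin 7), p.card = 2 → ¬ p ⊆ m →
      ∀ T T', T ∈ Bp → T' ∈ Bp → p ⊆ T → p ⊆ T' → T = T' := by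
    intro p hp hpm T T' hT hT' h1 h2
    have h := hlam p hp
    rw [if_neg hpm] at h
    exact Finset.card_le_one.mp (le_of_eq h) T (Finset.mem_filter.mpr ⟨hT, h1⟩)
      T' (Finset.mem_filter.mpr ⟨hT', h2⟩)
  have hE1 : ∀ p : Finset (Fin 7), p.card = 2 → ¬ p ⊆ m → ∃ T ∈ Bp, p ⊆ T := by
    intro p hp hpm
    have h := hlam p hp
    rw [if_neg hpm] at h
    have hne : (Bp.filter (fun t => p ⊆ t)).Nonempty :=
      Finset.card_pos.mp (by rw [h]; norm_num)
    obtain ⟨T, hT⟩ := hne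
    exact ⟨T, (Finset.mem_filter.mp hT).1, (Finset.mem_filter.mp hT).2⟩
  have hE2 : ∀ p : Finset (Fin 7), p.card = 2 → p ⊆ m →
      ∃ T1 T2, T1 ∈ Bp ∧ T2 ∈ Bp ∧ T1 ≠ T2 ∧ p ⊆ T1 ∧ p ⊆ T2 := by
    intro p hp hpm
    have h := hlam p hp
    rw [if_pos hpm] at h
    obtain ⟨T1, T2, hne, hft⟩ := Finset.card_eq_two.mp h
    have h1 : T1 ∈ Bp.filter (fun t => p ⊆ t) := by rw [hft]; simp
    have h2 : T2 ∈ Bp.filter (fun t => p ⊆ t) := by rw [hft]; simp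
    rw [Finset.mem_filter] at h1 h2
    exact ⟨T1, T2, h1.1, h2.1, hne, h1.2, h2.2⟩
  -- no block meets m in exactly one point
  have hB1 : ∀ T ∈ Bp, ∀ a0, T ∩ m = {a0} → False := by
    intro T hT a0 hTm
    have ha0 : a0 ∈ T ∩ m := by rw [hTm]; exact Finset.mem_singleton_self a0
    have ha0T : a0 ∈ T := (Finset.mem_inter.mp ha0).1
    have ha0m : a0 ∈ m := (Finset.mem_inter.mp ha0).2
    -- decompose m
    have hbc : (m.erase a0).card = 2 := by rw [Finset.card_erase_of_mem ha0m, hm3]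
    obtain ⟨b, c, hbne, hbcE⟩ := Finset.card_eq_two.mp hbc
    have hb : b ∈ m.erase a0 := by rw [hbcE]; simp
    have hc : c ∈ m.erase a0 := by rw [hbcE]; simp
    have hbm : b ∈ m := Finset.mem_of_mem_erase hb
    have hcm : c ∈ m := Finset.mem_of_mem_erase hc
    have hba0 : b ≠ a0 := Finset.ne_of_mem_erase hb
    have hca0 : c ≠ a0 := Finset.ne_of_mem_erase hc
    have hmeq : m = {a0, b, c} := by
      rw [show ({a0, b, c} : Finset (Fin 7)) = insert a0 {b, c} from rfl, ← hbcE,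
        Finset.insert_erase ha0m]
    have hmsub : ∀ T' ∈ Bp, a0 ∈ T' → b ∈ T' → c ∈ T' → False := by
      intro T' hT' h1 h2 h3
      exact hNM T' hT' (by
        rw [hmeq]
        intro z hz
        simp only [Finset.mem_insert, Finset.mem_singleton] at hz
        rcases hz with rfl | rfl | rfl <;> assumption)
    have key : ∀ w, w ∉ m → ∀ T1 T2, T1 ∈ Bp → T2 ∈ Bp → a0 ∈ T1 → w ∈ T1 →
        a0 ∈ T2 → w ∈ T2 → T1 = T2 := by
      intro w hw T1 T2 h1 h2 m1 m2 m3 m4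
      refine hU {a0, w} (Finset.card_pair ?_) ?_ T1 T2 h1 h2 ?_ ?_
      · rintro rfl; exact hw ha0m
      · intro hs; exact hw (hs (by simp))
      · exact Finset.insert_subset m1 (Finset.singleton_subset_iff.mpr m2)
      · exact Finset.insert_subset m3 (Finset.singleton_subset_iff.mpr m4)
    -- two blocks through {a0, b}
    obtain ⟨T1, T2, hT1, hT2, hT12, hs1, hs2⟩ := hE2 {a0, b}
      (Finset.card_pair (Ne.symm hba0))
      (by rw [hmeq]; intro z hz; simp only [Finset.mem_insert, Finset.mem_singleton] at hz ⊢
          rcases hz with rfl | rfl <;> simp)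
    have ha0T1 : a0 ∈ T1 := hs1 (by simp)
    have hbT1 : b ∈ T1 := hs1 (by simp)
    have ha0T2 : a0 ∈ T2 := hs2 (by simp)
    have hbT2 : b ∈ T2 := hs2 (by simp)
    -- a block through {a0, c}
    obtain ⟨T3, _, hT3', _, _, hs3, _⟩ := hE2 {a0, c}
      (Finset.card_pair (Ne.symm hca0))
      (by rw [hmeq]; intro z hz; simp only [Finset.mem_insert, Finset.mem_singleton] at hz ⊢
          rcases hz with rfl | rfl <;> simp)
    have ha0T3 : a0 ∈ T3 := hs3 (by simp)
    have hcT3 : c ∈ T3 := hs3 (by simp)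
    -- x1 ∈ T1 \ T2, x2 ∈ T2 \ T1
    have hx1ex : ¬ T1 ⊆ T2 := by
      intro hsub
      exact hT12 (Finset.eq_of_subset_of_card_le hsub (by rw [hT3 T1 hT1, hT3 T2 hT2]))
    obtain ⟨x1, hx1T1, hx1T2⟩ := Finset.not_subset.mp hx1ex
    have hx2ex : ¬ T2 ⊆ T1 := by
      intro hsub
      exact hT12 (Finset.eq_of_subset_of_card_le hsub (by rw [hT3 T1 hT1, hT3 T2 hT2])).symm
    obtain ⟨x2, hx2T2, hx2T1⟩ := Finset.not_subset.mp hx2ex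
    have hx1a0 : x1 ≠ a0 := fun h => hx1T2 (h ▸ ha0T2)
    have hx1b : x1 ≠ b := fun h => hx1T2 (h ▸ hbT2)
    have hx2a0 : x2 ≠ a0 := fun h => hx2T1 (h ▸ ha0T1)
    have hx2b : x2 ≠ b := fun h => hx2T1 (h ▸ hbT1)
    have hx1m : x1 ∉ m := by
      intro h
      rw [hmeq] at h
      simp only [Finset.mem_insert, Finset.mem_singleton] at h
      rcases h with rfl | rfl | rfl
      · exact hx1a0 rfl
      · exact hx1b rfl
      · exact hmsub T1 hT1 ha0T1 hbT1 hx1T1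
    have hx2m : x2 ∉ m := by
      intro h
      rw [hmeq] at h
      simp only [Finset.mem_insert, Finset.mem_singleton] at h
      rcases h with rfl | rfl | rfl
      · exact hx2a0 rfl
      · exact hx2b rfl
      · exact hmsub T2 hT2 ha0T2 hbT2 hx2T2
    have hx12 : x1 ≠ x2 := fun h => hx1T2 (h ▸ hx2T2)
    -- z1 : third point of T3
    have hz1ex : ¬ T3 ⊆ {a0, c} := by
      intro hsub
      have := Finset.card_le_card hsub
      rw [hT3 T3 hT3', Finset.card_pair (Ne.symm hca0)] at this
      omega
    obtain ⟨z1, hz1T3, hz1ac⟩ := Finset.not_subset.mp hz1ex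
    simp only [Finset.mem_insert, Finset.mem_singleton] at hz1ac
    push_neg at hz1ac
    have hz1m : z1 ∉ m := by
      intro h
      rw [hmeq] at h
      simp only [Finset.mem_insert, Finset.mem_singleton] at h
      rcases h with rfl | rfl | rfl
      · exact hz1ac.1 rfl
      · exact hmsub T3 hT3' ha0T3 hz1T3 hcT3
      · exact hz1ac.2 rfl
    -- x, y : the two points of T besides a0
    have hxex : ¬ T ⊆ {a0} := by
      intro hsub
      have := Finset.card_le_card hsub
      rw [hT3 T hT] at this
      simp at this
    obtain ⟨x, hxT, hxa0⟩ := Finset.not_subset.mp hxex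
    rw [Finset.mem_singleton] at hxa0
    have hyex : ¬ T ⊆ {a0, x} := by
      intro hsub
      have := Finset.card_le_card hsub
      rw [hT3 T hT, Finset.card_pair (Ne.symm hxa0)] at this
      omega
    obtain ⟨y, hyT, hyax⟩ := Finset.not_subset.mp hyex
    simp only [Finset.mem_insert, Finset.mem_singleton] at hyax
    push_neg at hyax
    have hnotm : ∀ z, z ∈ T → z ≠ a0 → z ∉ m := by
      intro z hzT hza0 hzm
      have : z ∈ T ∩ m := Finset.mem_inter.mpr ⟨hzT, hzm⟩
      rw [hTm, Finset.mem_singleton] at this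
      exact hza0 this
    have hxm : x ∉ m := hnotm x hxT hxa0
    have hym : y ∉ m := hnotm y hyT hyax.1
    -- blocks T1 T2 T3 are all different from T
    have hT1T : T1 ≠ T := by
      intro h
      have : b ∈ T := h ▸ hbT1
      exact (hnotm b this (Ne.symm hba0).symm) hbm
    have hT2T : T2 ≠ T := by
      intro h
      have : b ∈ T := h ▸ hbT2
      exact (hnotm b this (Ne.symm hba0).symm) hbm
    have hT3T : T3 ≠ T := by
      intro h
      have : c ∈ T := h ▸ hcT3
      exact (hnotm c this (Ne.symm hca0).symm) hcm
    -- all pairwise distinct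
    have h1z : x1 ≠ z1 := by
      intro h
      have := key x1 hx1m T1 T3 hT1 hT3' ha0T1 hx1T1 ha0T3 (h ▸ hz1T3)
      exact hmsub T1 hT1 ha0T1 hbT1 (this ▸ hcT3)
    have h2z : x2 ≠ z1 := by
      intro h
      have := key x2 hx2m T2 T3 hT2 hT3' ha0T2 hx2T2 ha0T3 (h ▸ hz1T3)
      exact hmsub T2 hT2 ha0T2 hbT2 (this ▸ hcT3)
    have h1x : x1 ≠ x := by
      intro h
      exact hT1T (key x1 hx1m T1 T hT1 hT ha0T1 hx1T1 ha0T (h ▸ hxT))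
    have h1y : x1 ≠ y := by
      intro h
      exact hT1T (key x1 hx1m T1 T hT1 hT ha0T1 hx1T1 ha0T (h ▸ hyT))
    have h2x : x2 ≠ x := by
      intro h
      exact hT2T (key x2 hx2m T2 T hT2 hT ha0T2 hx2T2 ha0T (h ▸ hxT))
    have h2y : x2 ≠ y := by
      intro h
      exact hT2T (key x2 hx2m T2 T hT2 hT ha0T2 hx2T2 ha0T (h ▸ hyT))
    have hzx : z1 ≠ x := by
      intro h
      exact hT3T (key z1 hz1m T3 T hT3' hT ha0T3 hz1T3 ha0T (h ▸ hxT))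
    have hzy : z1 ≠ y := by
      intro h
      exact hT3T (key z1 hz1m T3 T hT3' hT ha0T3 hz1T3 ha0T (h ▸ hyT))
    have hxy : x ≠ y := fun h => hyax.2 h.symm
    -- five distinct points avoiding m, but only four exist
    have hsub5 : ({x1, x2, z1, x, y} : Finset (Fin 7)) ⊆ Finset.univ \ m := by
      intro z hz
      simp only [Finset.mem_insert, Finset.mem_singleton] at hz
      rw [Finset.mem_sdiff]
      refine ⟨Finset.mem_univ z, ?_⟩
      rcases hz with rfl | rfl | rfl | rfl | rfl <;> assumption
    have hc5 : ({x1, x2, z1, x, y} : Finset (Fin 7)).card = 5 := by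
      rw [Finset.card_insert_of_notMem (by
            simp only [Finset.mem_insert, Finset.mem_singleton]; push_neg
            exact ⟨hx12, h1z, h1x, h1y⟩),
          Finset.card_insert_of_notMem (by
            simp only [Finset.mem_insert, Finset.mem_singleton]; push_neg
            exact ⟨h2z, h2x, h2y⟩),
          Finset.card_insert_of_notMem (by
            simp only [Finset.mem_insert, Finset.mem_singleton]; push_neg
            exact ⟨hzx, hzy⟩),
          Finset.card_insert_of_notMem (by simpa using hxy),
          Finset.card_singleton]
    have hYcard : (Finset.univ \ m : Finset (Fin 7)).card = 4 := by
      rw [Finset.card_sdiff_of_subset (Finset.subset_univ m), hm3]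
      simp
    have := Finset.card_le_card hsub5
    rw [hc5, hYcard] at this
    omega
  -- a block containing a pair outside m is disjoint from m
  have hC : ∀ T ∈ Bp, ∀ p : Finset (Fin 7), p.card = 2 → p ⊆ T →
      (∀ z ∈ p, z ∉ m) → ∀ z ∈ T, z ∉ m := by
    intro T hT p hp hpT hpm
    intro z0 hz0T hz0m
    apply hB1 T hT z0
    apply Finset.eq_singleton_iff_unique_mem.mpr
    refine ⟨Finset.mem_inter.mpr ⟨hz0T, hz0m⟩, ?_⟩
    intro z hz
    rw [Finset.mem_inter] at hz
    by_contra hzz0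
    have hzp : z ∉ p := fun h => hpm z h hz.2
    have hz0p : z0 ∉ p := fun h => hpm z0 h hz0m
    have hsub : insert z (insert z0 p) ⊆ T := by
      intro w hw
      simp only [Finset.mem_insert] at hw
      rcases hw with rfl | rfl | hw
      · exact hz.1
      · exact hz0T
      · exact hpT hw
    have hcard : (insert z (insert z0 p)).card = 4 := by
      rw [Finset.card_insert_of_notMem (by
            simp only [Finset.mem_insert]; push_neg; exact ⟨hzz0, hzp⟩),
          Finset.card_insert_of_notMem hz0p, hp]
    have := Finset.card_le_card hsub
    rw [hcard, hT3 T hT] at this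
    omega
  -- final contradiction inside the 4-set complement of m
  have hYcard : (Finset.univ \ m : Finset (Fin 7)).card = 4 := by
    rw [Finset.card_sdiff_of_subset (Finset.subset_univ m), hm3]
    simp
  obtain ⟨p1, hp1Y, hp1c⟩ := Finset.exists_subset_card_eq (s := Finset.univ \ m) (n := 2) (by omega)
  have hp1m : ∀ z ∈ p1, z ∉ m := fun z hz => (Finset.mem_sdiff.mp (hp1Y hz)).2
  have hp1nm : ¬ p1 ⊆ m := by
    intro h
    obtain ⟨z, hz⟩ := Finset.card_pos.mp (by rw [hp1c]; norm_num : 0 < p1.card)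
    exact hp1m z hz (h hz)
  obtain ⟨T1, hT1, hp1T1⟩ := hE1 p1 hp1c hp1nm
  have hT1m : ∀ z ∈ T1, z ∉ m := hC T1 hT1 p1 hp1c hp1T1 hp1m
  have hT1Y : T1 ⊆ Finset.univ \ m := fun z hz =>
    Finset.mem_sdiff.mpr ⟨Finset.mem_univ z, hT1m z hz⟩
  have hw : ((Finset.univ \ m) \ T1).card = 1 := by
    rw [Finset.card_sdiff_of_subset hT1Y, hYcard, hT3 T1 hT1]
  obtain ⟨w, hwE⟩ := Finset.card_eq_one.mp hw
  have hwmem : w ∈ (Finset.univ \ m) \ T1 := by rw [hwE]; exact Finset.mem_singleton_self w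
  have hwY : w ∈ Finset.univ \ m := (Finset.mem_sdiff.mp hwmem).1
  have hwT1 : w ∉ T1 := (Finset.mem_sdiff.mp hwmem).2
  obtain ⟨u, huT1⟩ := Finset.card_pos.mp (by rw [hT3 T1 hT1]; norm_num : 0 < T1.card)
  have hwu : w ≠ u := fun h => hwT1 (h ▸ huT1)
  have hp2c : ({w, u} : Finset (Fin 7)).card = 2 := Finset.card_pair hwu
  have hp2m : ∀ z ∈ ({w, u} : Finset (Fin 7)), z ∉ m := by
    intro z hz
    simp only [Finset.mem_insert, Finset.mem_singleton] at hz
    rcases hz with rfl | rfl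
    · exact (Finset.mem_sdiff.mp hwY).2
    · exact hT1m _ huT1
  have hp2nm : ¬ ({w, u} : Finset (Fin 7)) ⊆ m := fun h =>
    hp2m w (by simp) (h (by simp))
  obtain ⟨T2, hT2, hp2T2⟩ := hE1 {w, u} hp2c hp2nm
  have hT2m : ∀ z ∈ T2, z ∉ m := hC T2 hT2 {w, u} hp2c hp2T2 hp2m
  have hT2Y : T2 ⊆ Finset.univ \ m := fun z hz =>
    Finset.mem_sdiff.mpr ⟨Finset.mem_univ z, hT2m z hz⟩
  have hwT2 : w ∈ T2 := hp2T2 (by simp)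
  have hT12 : T1 ≠ T2 := fun h => hwT1 (h ▸ hwT2)
  -- T1 ∩ T2 has at least 2 elements
  have hunion : (T1 ∪ T2).card ≤ 4 := by
    have : T1 ∪ T2 ⊆ Finset.univ \ m := Finset.union_subset hT1Y hT2Y
    have := Finset.card_le_card this
    omega
  have hinter : 2 ≤ (T1 ∩ T2).card := by
    have h := Finset.card_inter_add_card_union T1 T2
    rw [hT3 T1 hT1, hT3 T2 hT2] at h
    omega
  obtain ⟨q, hqsub, hqc⟩ := Finset.exists_subset_card_eq (s := T1 ∩ T2) (n := 2) hinter
  have hqT1 : q ⊆ T1 := hqsub.trans Finset.inter_subset_left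
  have hqT2 : q ⊆ T2 := hqsub.trans Finset.inter_subset_right
  have hqnm : ¬ q ⊆ m := by
    intro h
    obtain ⟨z, hz⟩ := Finset.card_pos.mp (by rw [hqc]; norm_num : 0 < q.card)
    exact hT1m z (hqT1 hz) (h hz)
  exact hT12 (hU q hqc hqnm T1 T2 hT1 hT2 hqT1 hqT2)
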